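/- Let G be a non-bipartite graph on [n] and e = {u,v} ∈ E(G) an edge such that G∖e is bipartite. Then (I_{G∖e} : (x_u x_v − y_u y_v)) = I_{G∖e} + (x_i y_j − x_j y_i : i,j ∈ N_{G∖e}(u) or i,j ∈ N_{G∖e}(v)). -/

import Mathlib

open MvPolynomial

noncomputable section

/-- Parity binomial edge ideal. -/
def pbei {V : Type} (K : Type) [Field K] (G : SimpleGraph V) :
    Ideal (MvPolynomial (V ⊕ V) K) :=
  Ideal.span {f | ∃ i j, G.Adj i j ∧
    f = X (Sum.inl i) * X (Sum.inl j) - X (Sum.inr i) * X (Sum.inr j)}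

namespace Stmt15Aux

attribute [local instance] Classical.propDecidable

variable {n : ℕ}

/-- exponent vectors -/
abbrev Mon (n : ℕ) := (Fin n ⊕ Fin n) →₀ ℕ

def ee (s : Fin n ⊕ Fin n) : Mon n := Finsupp.single s 1

variable (c : Fin n → Bool)

def tok (i : Fin n) : Fin n ⊕ Fin n := if c i then Sum.inr i else Sum.inl i
def cotok (i : Fin n) : Fin n ⊕ Fin n := if c i then Sum.inl i else Sum.inr i

lemma tok_ne_cotok (i j : Fin n) : tok c i ≠ cotok c j := by
  unfold tok cotok
  rcases h1 : c i <;> rcases h2 : c j <;> simp_all <;> rintro rfl <;> simp_all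

lemma tok_inj {i j : Fin n} (h : tok c i = tok c j) : i = j := by
  unfold tok at h
  rcases h1 : c i <;> rcases h2 : c j <;> simp_all

lemma cotok_inj {i j : Fin n} (h : cotok c i = cotok c j) : i = j := by
  unfold cotok at h
  rcases h1 : c i <;> rcases h2 : c j <;> simp_all

def kk (α : Mon n) (i : Fin n) : ℕ := α (tok c i)
def dd (α : Mon n) (i : Fin n) : ℕ := α (Sum.inl i) + α (Sum.inr i)

lemma dd_tok_cotok (α : Mon n) (i : Fin n) : dd α i = α (tok c i) + α (cotok c i) := by
  unfold dd tok cotok; rcases h : c i <;> simp [Nat.add_comm]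

lemma kk_le_dd (α : Mon n) (i : Fin n) : kk c α i ≤ dd α i := by
  rw [dd_tok_cotok c]; exact Nat.le_add_right _ _

lemma dd_add (α β : Mon n) (i : Fin n) : dd (α + β) i = dd α i + dd β i := by
  simp [dd, Finsupp.add_apply]; ring

lemma kk_add (α β : Mon n) (i : Fin n) : kk c (α + β) i = kk c α i + kk c β i := by
  simp [kk, Finsupp.add_apply]

def vert : Fin n ⊕ Fin n → Fin n := Sum.elim id id

lemma dd_ee (s : Fin n ⊕ Fin n) (w : Fin n) :
    dd (ee s) w = if w = vert s then 1 else 0 := by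
  rcases s with i | i <;> simp [dd, ee, vert, Finsupp.single_apply] <;>
    rcases eq_or_ne w i with rfl | h <;> simp_all [eq_comm]

lemma vert_tok (i : Fin n) : vert (tok c i) = i := by
  unfold tok vert; rcases h : c i <;> simp

lemma vert_cotok (i : Fin n) : vert (cotok c i) = i := by
  unfold cotok vert; rcases h : c i <;> simp

lemma kk_ee_tok (i j : Fin n) : kk c (ee (tok c i)) j = if j = i then 1 else 0 := by
  simp only [kk, ee, Finsupp.single_apply]
  rcases eq_or_ne j i with rfl | h
  · simp
  · rw [if_neg, if_neg h]
    intro hh; exact h (tok_inj c hh).symm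

lemma kk_ee_cotok (i j : Fin n) : kk c (ee (cotok c i)) j = 0 := by
  simp only [kk, ee, Finsupp.single_apply]
  rw [if_neg]
  exact fun hh => tok_ne_cotok c j i hh.symm

lemma ext_dk {α β : Mon n} (hd : dd α = dd β) (hk : kk c α = kk c β) : α = β := by
  ext s
  have hd' := congrFun hd (vert s)
  have hk' := congrFun hk (vert s)
  rcases s with i | i <;>
  · simp only [dd, vert, Sum.elim_inl, Sum.elim_inr, id] at hd' hk'
    unfold kk tok at hk'
    rcases h : c i <;> simp only [h, if_pos, if_neg, Bool.false_eq_true, if_true, if_false] at hk' <;> omega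


/-! ### move relation and invariants -/

variable (A : Fin n → Fin n → Prop)

def step (α β : Mon n) : Prop :=
  ∃ i j γ, A i j ∧ α = γ + ee (tok c i) + ee (cotok c j) ∧ β = γ + ee (cotok c i) + ee (tok c j)

def Rel : Mon n → Mon n → Prop := Relation.ReflTransGen (step c A)

def Reach (S : Fin n → Prop) : Fin n → Fin n → Prop :=
  Relation.ReflTransGen (fun p q => A p q ∧ S p ∧ S q)

def creach (S : Fin n → Prop) (i j : Fin n) : Prop := S i ∧ S j ∧ Reach A S i j

def suppd (α : Mon n) : Fin n → Prop := fun w => dd α w ≠ 0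

def tt (α : Mon n) (i : Fin n) : ℕ :=
  ∑ j : Fin n, if creach A (suppd α) i j then kk c α j else 0

abbrev Data (n : ℕ) := (Fin n → ℕ) × (Fin n → ℕ) × ℕ

def Inv (α : Mon n) : Data n :=
  (fun w => dd α w, fun i => tt c A α i, ∑ j : Fin n, kk c α j)

variable {c A}

lemma reach_symm (hA : Symmetric A) (S : Fin n → Prop) : Symmetric (Reach A S) :=
  fun x y h => (haveI : Std.Symm (fun p q => A p q ∧ S p ∧ S q) :=
    ⟨fun _ _ h => ⟨hA h.1, h.2.2, h.2.1⟩⟩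
    Std.Symm.symm (r := Relation.ReflTransGen (fun p q => A p q ∧ S p ∧ S q)) x y h)

lemma creach_congr (hA : Symmetric A) {S : Fin n → Prop} {i p : Fin n}
    (h : creach A S i p) (j : Fin n) : creach A S i j ↔ creach A S p j := by
  obtain ⟨hi, hp, hr⟩ := h
  constructor
  · rintro ⟨_, hj, hr2⟩; exact ⟨hp, hj, ((reach_symm hA S) hr).trans hr2⟩
  · rintro ⟨_, hj, hr2⟩; exact ⟨hi, hj, hr.trans hr2⟩

lemma step_symm (hA : Symmetric A) : Symmetric (step c A) := by
  rintro α β ⟨i, j, γ, hij, ha, hb⟩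
  exact ⟨j, i, γ, hA hij, by rw [hb]; abel, by rw [ha]; abel⟩

lemma rel_symm (hA : Symmetric A) : Symmetric (Rel c A) :=
  fun x y h => (haveI : Std.Symm (step c A) := ⟨fun _ _ h => step_symm hA h⟩
    Std.Symm.symm (r := Relation.ReflTransGen (step c A)) x y h)

lemma step_add (γ : Mon n) {α β : Mon n} (h : step c A α β) : step c A (γ + α) (γ + β) := by
  obtain ⟨i, j, δ, hij, ha, hb⟩ := h
  exact ⟨i, j, γ + δ, hij, by rw [ha]; abel, by rw [hb]; abel⟩

lemma rel_add (γ : Mon n) {α β : Mon n} (h : Rel c A α β) : Rel c A (γ + α) (γ + β) := by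
  induction h with
  | refl => exact Relation.ReflTransGen.refl
  | tail _ hstep ih => exact ih.tail (step_add γ hstep)

/-! ### forward invariance -/

lemma dd_step {α β : Mon n} (h : step c A α β) : dd α = dd β := by
  obtain ⟨i, j, γ, hij, ha, hb⟩ := h
  funext w
  rw [ha, hb]
  simp [dd_add, dd_ee, vert_tok, vert_cotok]

lemma kk_step_decomp {α β : Mon n} (h : step c A α β) :
    ∃ i j γ, A i j ∧ suppd α i ∧ suppd α j ∧
      (∀ w, kk c α w = kk c γ w + (if w = i then 1 else 0)) ∧
      (∀ w, kk c β w = kk c γ w + (if w = j then 1 else 0)) ∧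
      dd α = dd β := by
  obtain ⟨i, j, γ, hij, ha, hb⟩ := h
  have hdd : dd α = dd β := dd_step ⟨i, j, γ, hij, ha, hb⟩
  refine ⟨i, j, γ, hij, ?_, ?_, ?_, ?_, hdd⟩
  · show dd α i ≠ 0
    rw [ha]; simp [dd_add, dd_ee, vert_tok, vert_cotok]
  · show dd α j ≠ 0
    rw [ha]; simp [dd_add, dd_ee, vert_tok, vert_cotok]
  · intro w; rw [ha]; simp [kk_add, kk_ee_tok, kk_ee_cotok]
  · intro w; rw [hb]; simp [kk_add, kk_ee_tok, kk_ee_cotok]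

lemma sum_kk_step {α β : Mon n} (h : step c A α β) :
    ∑ w : Fin n, kk c α w = ∑ w : Fin n, kk c β w := by
  obtain ⟨i, j, γ, _, _, _, hka, hkb, _⟩ := kk_step_decomp h
  simp only [hka, hkb, Finset.sum_add_distrib]
  congr 1
  simp

lemma tt_step (hA : Symmetric A) {α β : Mon n} (h : step c A α β) : tt c A α = tt c A β := by
  obtain ⟨i, j, γ, hij, hSi, hSj, hka, hkb, hdd⟩ := kk_step_decomp h
  have hS : suppd α = suppd β := by funext w; unfold suppd; rw [hdd]
  funext w
  unfold tt
  rw [← hS]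
  have hiff : creach A (suppd α) w i ↔ creach A (suppd α) w j := by
    constructor
    · rintro ⟨hw, _, hr⟩; exact ⟨hw, hSj, hr.tail ⟨hij, hSi, hSj⟩⟩
    · rintro ⟨hw, _, hr⟩; exact ⟨hw, hSi, hr.tail ⟨hA hij, hSj, hSi⟩⟩
  have key : ∀ (δ : Mon n) (m : Fin n),
      (∀ w, kk c δ w = kk c γ w + (if w = m then 1 else 0)) →
      ∑ x : Fin n, (if creach A (suppd α) w x then kk c δ x else 0)
        = (∑ x : Fin n, if creach A (suppd α) w x then kk c γ x else 0)
          + (if creach A (suppd α) w m then 1 else 0) := by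
    intro δ m hk
    have hpt : ∀ x : Fin n, (if creach A (suppd α) w x then kk c δ x else 0)
        = (if creach A (suppd α) w x then kk c γ x else 0)
          + (if x = m then (if creach A (suppd α) w m then 1 else 0) else 0) := by
      intro x
      by_cases hxm : x = m
      · subst hxm
        by_cases hcx : creach A (suppd α) w x <;> simp [hcx, hk x]
      · by_cases hcx : creach A (suppd α) w x <;> simp [hcx, hxm, hk x]
    rw [Finset.sum_congr rfl (fun x _ => hpt x), Finset.sum_add_distrib,
      Finset.sum_ite_eq' Finset.univ m (fun _ => if creach A (suppd α) w m then (1:ℕ) else 0)]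
    simp
  rw [key α i hka, key β j hkb, hiff]

lemma inv_step (hA : Symmetric A) {α β : Mon n} (h : step c A α β) : Inv c A α = Inv c A β := by
  unfold Inv
  rw [show (fun w => dd α w) = (fun w => dd β w) from by rw [dd_step h],
     tt_step hA h, sum_kk_step h]

lemma inv_rel (hA : Symmetric A) {α β : Mon n} (h : Rel c A α β) : Inv c A α = Inv c A β := by
  induction h with
  | refl => rfl
  | tail _ hstep ih => exact ih.trans (inv_step hA hstep)


/-! ### transport: invariants determine the class -/

lemma exists_decomp {γ : Mon n} {s : Fin n ⊕ Fin n} (h : γ s ≠ 0) : ∃ γ₁, γ = γ₁ + ee s := by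
  refine ⟨γ - ee s, ?_⟩
  ext t
  rcases eq_or_ne t s with rfl | ht
  · simp [ee, Finsupp.tsub_apply, Finsupp.single_apply]
    omega
  · simp [ee, Finsupp.tsub_apply, Finsupp.single_apply, ht.symm ,
      (show ¬ (s = t) from fun hh => ht hh.symm)]

lemma dd_cfg (γ : Mon n) (s t : Fin n ⊕ Fin n) (w : Fin n) :
    dd (γ + ee s + ee t) w = dd γ w + (if w = vert s then 1 else 0) + (if w = vert t then 1 else 0) := by
  simp [dd_add, dd_ee]

lemma walk_move (hA : Symmetric A) (hirr : ∀ i, ¬ A i i) {S : Fin n → Prop} {p q : Fin n}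
    (h : Relation.ReflTransGen (fun x y => A x y ∧ S x ∧ S y) p q) :
    ∀ γ : Mon n, (∀ w, S w → dd (γ + ee (tok c p) + ee (cotok c q)) w ≠ 0) →
      Rel c A (γ + ee (tok c p) + ee (cotok c q)) (γ + ee (cotok c p) + ee (tok c q)) := by
  refine Relation.ReflTransGen.head_induction_on
    (motive := fun a _ => ∀ γ : Mon n, (∀ w, S w → dd (γ + ee (tok c a) + ee (cotok c q)) w ≠ 0) →
      Rel c A (γ + ee (tok c a) + ee (cotok c q)) (γ + ee (cotok c a) + ee (tok c q)))
    h ?_ ?_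
  · intro γ _
    rw [add_right_comm]
    exact Relation.ReflTransGen.refl
  · intro p' t hrel hrest ih γ hcond
    obtain ⟨hApt, hSp, hSt⟩ := hrel
    rcases eq_or_ne t q with heq | htq
    · subst heq
      exact Relation.ReflTransGen.single ⟨p', t, γ, hApt, rfl, rfl⟩
    · have hpt : p' ≠ t := by rintro rfl; exact hirr p' hApt
      have hγt : dd γ t ≠ 0 := by
        have := hcond t hSt
        rw [dd_cfg, vert_tok, vert_cotok] at this
        simpa [hpt.symm, htq] using this
      rw [dd_tok_cotok c] at hγt
      rcases Nat.eq_zero_or_pos (γ (cotok c t)) with hct | hct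
      · -- tok c t is present in γ
        have htt : γ (tok c t) ≠ 0 := by omega
        obtain ⟨γ₁, rfl⟩ := exists_decomp htt
        have ihrel := ih (γ₁ + ee (tok c p')) ?_
        · have step2 : step c A (γ₁ + ee (tok c p') + ee (cotok c t) + ee (tok c q))
              (γ₁ + ee (tok c t) + ee (cotok c p') + ee (tok c q)) :=
            ⟨p', t, γ₁ + ee (tok c q), hApt, by abel, by abel⟩
          have e1 : γ₁ + ee (tok c t) + ee (tok c p') + ee (cotok c q)
              = γ₁ + ee (tok c p') + ee (tok c t) + ee (cotok c q) := by abel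
          rw [e1]
          exact ihrel.tail step2
        · intro w hw
          have := hcond w hw
          rw [dd_cfg, vert_tok, vert_cotok] at this ⊢
          rw [dd_add, dd_ee, vert_tok] at this ⊢
          omega
      · -- cotok c t is present in γ
        have hct' : γ (cotok c t) ≠ 0 := by omega
        obtain ⟨γ₁, rfl⟩ := exists_decomp hct'
        have step1 : step c A (γ₁ + ee (cotok c t) + ee (tok c p') + ee (cotok c q))
            (γ₁ + ee (cotok c q) + ee (cotok c p') + ee (tok c t)) :=
          ⟨p', t, γ₁ + ee (cotok c q), hApt, by abel, by abel⟩
        have ihrel := ih (γ₁ + ee (cotok c p')) ?_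
        · refine Relation.ReflTransGen.head step1 ?_
          rw [show γ₁ + ee (cotok c q) + ee (cotok c p') + ee (tok c t)
              = γ₁ + ee (cotok c p') + ee (tok c t) + ee (cotok c q) from by abel,
            show γ₁ + ee (cotok c t) + ee (cotok c p') + ee (tok c q)
              = γ₁ + ee (cotok c p') + ee (cotok c t) + ee (tok c q) from by abel]
          exact ihrel
        · intro w hw
          have := hcond w hw
          rw [dd_cfg, vert_tok, vert_cotok] at this ⊢
          rw [dd_add, dd_ee, vert_cotok] at this ⊢
          omega


def mea (c : Fin n → Bool) (α β : Mon n) : ℕ :=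
  ∑ j : Fin n, ((kk c α j - kk c β j) + (kk c β j - kk c α j))

lemma mea_comm (α β : Mon n) : mea c α β = mea c β α := by
  unfold mea; apply Finset.sum_congr rfl; intro x _; omega

lemma inv_dd {α β : Mon n} (h : Inv c A α = Inv c A β) : dd α = dd β := by
  have := congrArg Prod.fst h
  simpa [Inv] using funext_iff.mpr (funext_iff.mp this)

lemma inv_tt {α β : Mon n} (h : Inv c A α = Inv c A β) : tt c A α = tt c A β := by
  have := congrArg (fun p => p.2.1) h
  simpa [Inv] using this

lemma move_toward (hA : Symmetric A) (hirr : ∀ i, ¬ A i i) {α β : Mon n} {w : Fin n}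
    (hInv : Inv c A α = Inv c A β) (hw : kk c β w < kk c α w) :
    ∃ α', Rel c A α α' ∧ mea c α' β + 1 ≤ mea c α β := by
  have hdd : dd α = dd β := inv_dd hInv
  have htt : tt c A α = tt c A β := inv_tt hInv
  have hS : suppd α = suppd β := by funext x; unfold suppd; rw [hdd]
  have hSw : suppd α w := by
    unfold suppd
    have := kk_le_dd c α w
    omega
  -- find a receiving vertex j
  have hj : ∃ j, creach A (suppd α) w j ∧ kk c α j < kk c β j := by
    by_contra hcon
    push_neg at hcon
    have hlt : tt c A β w < tt c A α w := by
      unfold tt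
      rw [← hS]
      apply Finset.sum_lt_sum
      · intro x _
        by_cases hcx : creach A (suppd α) w x
        · simp only [if_pos hcx]
          exact hcon x hcx
        · simp [hcx]
      · refine ⟨w, Finset.mem_univ w, ?_⟩
        have hcw : creach A (suppd α) w w := ⟨hSw, hSw, Relation.ReflTransGen.refl⟩
        simpa [hcw] using hw
    rw [htt] at hlt
    omega
  obtain ⟨j, hcr, hkj⟩ := hj
  have hwj : w ≠ j := by rintro rfl; omega
  have htokw : α (tok c w) ≠ 0 := by
    show kk c α w ≠ 0
    omega
  have hcotokj : α (cotok c j) ≠ 0 := by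
    have h1 : kk c β j ≤ dd β j := kk_le_dd c β j
    have h2 := dd_tok_cotok c α j
    have h3 : dd α j = dd β j := by rw [hdd]
    have : kk c α j = α (tok c j) := rfl
    omega
  obtain ⟨γ', hγ'⟩ := exists_decomp htokw
  have hγ'c : γ' (cotok c j) ≠ 0 := by
    have h5 : α (cotok c j) = γ' (cotok c j) + (ee (tok c w)) (cotok c j) := by
      rw [hγ', Finsupp.add_apply]
    rw [ee, Finsupp.single_apply,
      if_neg (fun hh : tok c w = cotok c j => tok_ne_cotok c w j hh)] at h5
    omega
  obtain ⟨γ, hγ⟩ := exists_decomp hγ'c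
  have hαeq : α = γ + ee (tok c w) + ee (cotok c j) := by rw [hγ', hγ]; abel
  have hrel : Rel c A α (γ + ee (cotok c w) + ee (tok c j)) := by
    rw [hαeq]
    refine walk_move hA hirr hcr.2.2 γ ?_
    intro x hx
    rw [← hαeq]
    exact hx
  set α' := γ + ee (cotok c w) + ee (tok c j) with hα'
  have hkα : ∀ x, kk c α x = kk c γ x + (if x = w then 1 else 0) := by
    intro x; rw [hαeq]; simp [kk_add, kk_ee_tok, kk_ee_cotok]
  have hkα' : ∀ x, kk c α' x = kk c γ x + (if x = j then 1 else 0) := by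
    intro x; rw [hα']; simp [kk_add, kk_ee_tok, kk_ee_cotok]
  refine ⟨α', hrel, ?_⟩
  have hlt : mea c α' β < mea c α β := by
    unfold mea
    apply Finset.sum_lt_sum
    · intro x _
      have h1 := hkα x
      have h2 := hkα' x
      rcases eq_or_ne x w with rfl | hxw
      · rw [if_pos rfl] at h1
        rw [if_neg hwj] at h2
        omega
      · rw [if_neg hxw] at h1
        rcases eq_or_ne x j with rfl | hxj
        · rw [if_pos rfl] at h2
          omega
        · rw [if_neg hxj] at h2
          omega
    · refine ⟨w, Finset.mem_univ w, ?_⟩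
      have h1 := hkα w
      have h2 := hkα' w
      rw [if_pos rfl] at h1
      rw [if_neg hwj] at h2
      omega
  omega

lemma transport (hA : Symmetric A) (hirr : ∀ i, ¬ A i i) :
    ∀ N (α β : Mon n), mea c α β ≤ N → Inv c A α = Inv c A β → Rel c A α β := by
  intro N
  induction N with
  | zero =>
      intro α β hm hInv
      have hk : kk c α = kk c β := by
        funext x
        have : (kk c α x - kk c β x) + (kk c β x - kk c α x) = 0 := by
          have := Finset.sum_le_sum_of_subset (Finset.subset_univ {x})
            (f := fun j => (kk c α j - kk c β j) + (kk c β j - kk c α j))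
          simp only [Finset.sum_singleton] at this
          unfold mea at hm
          omega
        omega
      rw [ext_dk c (inv_dd hInv) hk]
      exact Relation.ReflTransGen.refl
  | succ N ih =>
      intro α β hm hInv
      by_cases hk : kk c α = kk c β
      · rw [ext_dk c (inv_dd hInv) hk]
        exact Relation.ReflTransGen.refl
      · have : ∃ w, kk c α w ≠ kk c β w := by
          by_contra hc; push_neg at hc; exact hk (funext hc)
        obtain ⟨w, hww⟩ := this
        rcases Nat.lt_or_ge (kk c β w) (kk c α w) with hlt | hge
        · obtain ⟨α', hrel, hmea⟩ := move_toward hA hirr hInv hlt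
          have hInv' : Inv c A α' = Inv c A β := (inv_rel hA hrel).symm.trans hInv
          exact hrel.trans (ih α' β (by omega) hInv')
        · have hlt : kk c α w < kk c β w := by omega
          obtain ⟨β', hrel, hmea⟩ := move_toward hA hirr hInv.symm hlt
          have hInv' : Inv c A α = Inv c A β' := hInv.trans (inv_rel hA hrel)
          have h2 : Rel c A α β' := by
            refine ih α β' ?_ hInv'
            have e1 : mea c α β' = mea c β' α := mea_comm α β'
            have e2 : mea c β α = mea c α β := mea_comm β α
            omega
          exact h2.trans (rel_symm hA hrel)


/-! ### class sums and pure difference ideals -/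

section Span

variable {K : Type} [Field K] {D : Type}

def cs (inv : Mon n → D) (g : MvPolynomial (Fin n ⊕ Fin n) K) (q : D) : K :=
  ∑ α ∈ g.support, if inv α = q then MvPolynomial.coeff α g else 0

lemma cs_sum_subset (inv : Mon n → D) (g : MvPolynomial (Fin n ⊕ Fin n) K)
    {s : Finset (Mon n)} (hs : g.support ⊆ s) (q : D) :
    cs inv g q = ∑ α ∈ s, if inv α = q then MvPolynomial.coeff α g else 0 := by
  refine Finset.sum_subset hs ?_
  intro x _ hx
  rw [MvPolynomial.notMem_support_iff.mp hx]
  simp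

lemma cs_add (inv : Mon n → D) (g h : MvPolynomial (Fin n ⊕ Fin n) K) (q : D) :
    cs inv (g + h) q = cs inv g q + cs inv h q := by
  rw [cs_sum_subset inv (g + h) (MvPolynomial.support_add),
    cs_sum_subset inv g (Finset.subset_union_left (s₂ := h.support)),
    cs_sum_subset inv h (Finset.subset_union_right (s₁ := g.support)),
    ← Finset.sum_add_distrib]
  apply Finset.sum_congr rfl
  intro x _
  by_cases hx : inv x = q <;> simp [hx, MvPolynomial.coeff_add]

lemma cs_smul (inv : Mon n → D) (a : K) (g : MvPolynomial (Fin n ⊕ Fin n) K) (q : D) :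
    cs inv (a • g) q = a * cs inv g q := by
  rw [cs_sum_subset inv (a • g) (Finsupp.support_smul)]
  unfold cs
  rw [Finset.mul_sum]
  apply Finset.sum_congr rfl
  intro x _
  by_cases hx : inv x = q <;> simp [hx, MvPolynomial.coeff_smul, smul_eq_mul]

lemma cs_monomial (inv : Mon n → D) (δ : Mon n) (a : K) (q : D) :
    cs inv (monomial δ a) q = if inv δ = q then a else 0 := by
  by_cases ha : a = 0
  · subst ha; simp [cs]
  · unfold cs
    rw [MvPolynomial.support_monomial, if_neg ha, Finset.sum_singleton,
      MvPolynomial.coeff_monomial, if_pos rfl]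

lemma cs_sub (inv : Mon n → D) (g h : MvPolynomial (Fin n ⊕ Fin n) K) (q : D) :
    cs inv (g - h) q = cs inv g q - cs inv h q := by
  rw [sub_eq_add_neg, ← neg_one_smul K h, cs_add, cs_smul]; ring

lemma cs_mul_monomial (inv : Mon n → D) (γ : Mon n) (g : MvPolynomial (Fin n ⊕ Fin n) K) (q : D) :
    cs inv (monomial γ 1 * g) q = cs (fun δ => inv (γ + δ)) g q := by
  induction g using MvPolynomial.induction_on' with
  | monomial δ a => rw [monomial_mul, one_mul, cs_monomial, cs_monomial]
  | add p p' ihp ihp' => rw [mul_add, cs_add, cs_add, ihp, ihp']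

lemma cs_comp_zero {inv inv' : Mon n → D} (hcong : ∀ a b, inv a = inv b → inv' a = inv' b)
    (g : MvPolynomial (Fin n ⊕ Fin n) K) (h0 : ∀ q, cs inv g q = 0) (q : D) :
    cs inv' g q = 0 := by
  unfold cs
  rw [← Finset.sum_fiberwise_of_maps_to (fun α hα => Finset.mem_image_of_mem inv hα)
    (fun α => if inv' α = q then MvPolynomial.coeff α g else 0)]
  apply Finset.sum_eq_zero
  intro q₀ hq₀
  obtain ⟨α₀, hα₀, rfl⟩ := Finset.mem_image.mp hq₀
  rw [Finset.sum_congr rfl (fun α hα => by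
    rw [hcong α α₀ (Finset.mem_filter.mp hα).2] :
    ∀ α ∈ g.support.filter (fun α => inv α = inv α₀),
      (if inv' α = q then MvPolynomial.coeff α g else 0)
        = (if inv' α₀ = q then MvPolynomial.coeff α g else 0))]
  by_cases hc : inv' α₀ = q
  · simp only [if_pos hc]
    have h1 := h0 (inv α₀)
    unfold cs at h1
    rw [Finset.sum_filter]
    exact h1
  · simp [hc]

lemma cs_fiber_zero {inv inv' : Mon n → D} (hcong : ∀ a b, inv a = inv b → inv' a = inv' b)
    (g : MvPolynomial (Fin n ⊕ Fin n) K) (r : D)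
    (h0 : ∀ a, inv' a = r → cs inv g (inv a) = 0) :
    cs inv' g r = 0 := by
  unfold cs
  rw [← Finset.sum_fiberwise_of_maps_to (fun α hα => Finset.mem_image_of_mem inv hα)
    (fun α => if inv' α = r then MvPolynomial.coeff α g else 0)]
  apply Finset.sum_eq_zero
  intro q₀ hq₀
  obtain ⟨α₀, hα₀, rfl⟩ := Finset.mem_image.mp hq₀
  rw [Finset.sum_congr rfl (fun α hα => by
    rw [hcong α α₀ (Finset.mem_filter.mp hα).2] :
    ∀ α ∈ g.support.filter (fun α => inv α = inv α₀),
      (if inv' α = r then MvPolynomial.coeff α g else 0)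
        = (if inv' α₀ = r then MvPolynomial.coeff α g else 0))]
  by_cases hc : inv' α₀ = r
  · simp only [if_pos hc]
    have h1 := h0 α₀ hc
    unfold cs at h1
    rw [Finset.sum_filter]
    exact h1
  · simp [hc]

def Bset (R : Mon n → Mon n → Prop) : Set (MvPolynomial (Fin n ⊕ Fin n) K) :=
  {f | ∃ p q, R p q ∧ f = monomial p 1 - monomial q 1}

lemma cs_zero_of_mem_span {R : Mon n → Mon n → Prop} {inv : Mon n → D}
    (hfwd : ∀ p q, R p q → inv p = inv q)
    (hcong : ∀ γ a b, inv a = inv b → inv (γ + a) = inv (γ + b))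
    {g : MvPolynomial (Fin n ⊕ Fin n) K} (hg : g ∈ Ideal.span (Bset R)) (q : D) :
    cs inv g q = 0 := by
  induction hg using Submodule.span_induction generalizing q with
  | mem f hf =>
      obtain ⟨p, q', hR, rfl⟩ := hf
      rw [cs_sub, cs_monomial, cs_monomial, hfwd p q' hR]
      ring
  | zero => simp [cs]
  | add x y _ _ ihx ihy => rw [cs_add, ihx, ihy]; ring
  | smul a x _ ih =>
      rw [smul_eq_mul]
      induction a using MvPolynomial.induction_on' with
      | monomial γ s =>
          have : (monomial γ s : MvPolynomial (Fin n ⊕ Fin n) K) * x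
              = s • (monomial γ 1 * x) := by
            rw [← smul_mul_assoc, MvPolynomial.smul_monomial, smul_eq_mul, mul_one]
          rw [this, cs_smul, cs_mul_monomial]
          rw [cs_comp_zero (fun a b hab => hcong γ a b hab) x (fun q' => ih q') q]
          ring
      | add p p' ihp ihp' => rw [add_mul, cs_add, ihp, ihp']; ring

lemma mem_span_of_cs_zero {R : Mon n → Mon n → Prop} {inv : Mon n → D}
    (hback : ∀ a b, inv a = inv b →
      (monomial a 1 - monomial b 1 : MvPolynomial (Fin n ⊕ Fin n) K) ∈ Ideal.span (Bset R)) :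
    ∀ N (g : MvPolynomial (Fin n ⊕ Fin n) K), g.support.card ≤ N →
      (∀ q, cs inv g q = 0) → g ∈ Ideal.span (Bset R) := by
  intro N
  induction N with
  | zero =>
      intro g hcard _
      have hse : g.support = ∅ := Finset.card_eq_zero.mp (Nat.le_zero.mp hcard)
      rw [MvPolynomial.support_eq_empty.mp hse]
      exact Ideal.zero_mem _
  | succ N ih =>
      intro g hcard hcs
      by_cases hg0 : g = 0
      · rw [hg0]; exact Ideal.zero_mem _
      · obtain ⟨α₀, hα₀⟩ := (MvPolynomial.support_nonempty.mpr hg0)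
        have hβ : ∃ β ∈ g.support, β ≠ α₀ ∧ inv β = inv α₀ := by
          by_contra hcon
          push_neg at hcon
          have h1 := hcs (inv α₀)
          unfold cs at h1
          rw [Finset.sum_eq_single α₀ (fun β hβs hβne => by
            rw [if_neg (hcon β hβs hβne)]) (fun h => absurd hα₀ h)] at h1
          rw [if_pos rfl] at h1
          exact (MvPolynomial.mem_support_iff.mp hα₀) h1
        obtain ⟨β, hβs, hβne, hβinv⟩ := hβ
        set C := MvPolynomial.coeff α₀ g with hC
        set g' := g - C • (monomial α₀ 1 - monomial β 1) with hg'
        have hcoeff : ∀ x, MvPolynomial.coeff x g' = MvPolynomial.coeff x g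
            - C * ((if α₀ = x then 1 else 0) - (if β = x then 1 else 0)) := by
          intro x
          rw [hg', MvPolynomial.coeff_sub, MvPolynomial.coeff_smul, MvPolynomial.coeff_sub,
            MvPolynomial.coeff_monomial, MvPolynomial.coeff_monomial, smul_eq_mul]
        have hsupp : g'.support ⊆ g.support.erase α₀ := by
          intro x hx
          have hx' := MvPolynomial.mem_support_iff.mp hx
          rw [hcoeff x] at hx'
          rcases eq_or_ne x α₀ with rfl | hxα
          · rw [if_pos rfl, if_neg hβne] at hx'
            simp [hC] at hx'
          · refine Finset.mem_erase.mpr ⟨hxα, ?_⟩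
            rcases eq_or_ne x β with rfl | hxβ
            · exact hβs
            · rw [if_neg (fun h => hxα h.symm), if_neg (fun h => hxβ h.symm)] at hx'
              rw [MvPolynomial.mem_support_iff]
              intro h0
              rw [h0] at hx'
              simp at hx'
        have hcard' : g'.support.card ≤ N := by
          have h1 : (g.support.erase α₀).card < g.support.card := Finset.card_erase_lt_of_mem hα₀
          have h2 := Finset.card_le_card hsupp
          omega
        have hcs' : ∀ q, cs inv g' q = 0 := by
          intro q
          rw [hg', cs_sub, cs_smul, cs_sub, cs_monomial, cs_monomial, hβinv, hcs q]
          ring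
        have hmem' := ih g' hcard' hcs'
        have hgeq : g = g' + C • (monomial α₀ 1 - monomial β 1) := by rw [hg']; ring
        rw [hgeq, MvPolynomial.smul_eq_C_mul]
        exact Ideal.add_mem _ hmem' (Ideal.mul_mem_left _ _ (hback α₀ β hβinv.symm))

end Span


section Connect

variable {K : Type} [Field K]

def Rgen (c : Fin n → Bool) (A : Fin n → Fin n → Prop) (p q : Mon n) : Prop :=
  ∃ i j, A i j ∧ p = ee (tok c i) + ee (cotok c j) ∧ q = ee (cotok c i) + ee (tok c j)

variable {c : Fin n → Bool} {A : Fin n → Fin n → Prop}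

lemma rgen_step {p q : Mon n} (h : Rgen c A p q) : step c A p q := by
  obtain ⟨i, j, hij, hp, hq⟩ := h
  exact ⟨i, j, 0, hij, by rw [hp]; abel, by rw [hq]; abel⟩

lemma step_decomp {α β : Mon n} (h : step c A α β) :
    ∃ γ p q, Rgen c A p q ∧ α = γ + p ∧ β = γ + q := by
  obtain ⟨i, j, γ, hij, ha, hb⟩ := h
  exact ⟨γ, _, _, ⟨i, j, hij, rfl, rfl⟩, by rw [ha, add_assoc], by rw [hb, add_assoc]⟩

lemma rel_mem_span {a b : Mon n} (h : Rel c A a b) :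
    (monomial a 1 - monomial b 1 : MvPolynomial (Fin n ⊕ Fin n) K)
      ∈ Ideal.span (Bset (Rgen c A)) := by
  induction h with
  | refl => rw [sub_self]; exact Ideal.zero_mem _
  | tail hr hstep ih =>
      rename_i b' b
      obtain ⟨γ, p, q, hR, hb', hb⟩ := step_decomp hstep
      have : (monomial a 1 - monomial b 1 : MvPolynomial (Fin n ⊕ Fin n) K)
          = (monomial a 1 - monomial b' 1)
            + monomial γ 1 * (monomial p 1 - monomial q 1) := by
        rw [mul_sub, monomial_mul, monomial_mul, one_mul, hb', hb]
        ring
      rw [this]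
      exact Ideal.add_mem _ ih
        (Ideal.mul_mem_left _ _ (Ideal.subset_span ⟨p, q, hR, rfl⟩))

lemma inv_cong (hA : Symmetric A) (hirr : ∀ i, ¬ A i i) (γ : Mon n) {a b : Mon n}
    (h : Inv c A a = Inv c A b) : Inv c A (γ + a) = Inv c A (γ + b) :=
  inv_rel hA (rel_add γ (transport hA hirr (mea c a b) a b le_rfl h))

lemma mem_span_inv_iff (hA : Symmetric A) (hirr : ∀ i, ¬ A i i)
    (g : MvPolynomial (Fin n ⊕ Fin n) K) :
    g ∈ Ideal.span (Bset (Rgen c A)) ↔ ∀ q, cs (Inv c A) g q = 0 := by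
  constructor
  · intro hg q
    exact cs_zero_of_mem_span (fun p q' h => inv_step hA (rgen_step h))
      (fun γ a b h => inv_cong hA hirr γ h) hg q
  · intro h
    exact mem_span_of_cs_zero
      (fun a b hab => rel_mem_span (transport hA hirr (mea c a b) a b le_rfl hab))
      g.support.card g le_rfl h

end Connect


/-! ### the two systems and the component correspondence -/

def A2 (Hadj : Fin n → Fin n → Prop) (u v : Fin n) : Fin n → Fin n → Prop :=
  fun i j => Hadj i j ∨ (i ≠ j ∧ Hadj u i ∧ Hadj u j) ∨ (i ≠ j ∧ Hadj v i ∧ Hadj v j)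

def amon (u v : Fin n) : Mon n := ee (Sum.inl u) + ee (Sum.inl v)
def bmon (u v : Fin n) : Mon n := ee (Sum.inr u) + ee (Sum.inr v)

section Corr

variable {c : Fin n → Bool} {Hadj : Fin n → Fin n → Prop} {u v : Fin n}

lemma a2_symm (hAs : Symmetric Hadj) : Symmetric (A2 Hadj u v) := by
  rintro i j (h | ⟨hne, h1, h2⟩ | ⟨hne, h1, h2⟩)
  · exact Or.inl (hAs h)
  · exact Or.inr (Or.inl ⟨hne.symm, h2, h1⟩)
  · exact Or.inr (Or.inr ⟨hne.symm, h2, h1⟩)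

lemma a2_irrefl (hirr : ∀ i, ¬ Hadj i i) : ∀ i, ¬ A2 Hadj u v i i := by
  rintro i (h | ⟨hne, _, _⟩ | ⟨hne, _, _⟩)
  · exact hirr i h
  · exact hne rfl
  · exact hne rfl

lemma inl_ne_tok (hcu : c u = true) (j : Fin n) : Sum.inl u ≠ tok c j := by
  unfold tok
  rcases hj : c j with _ | _
  · simp only [Bool.false_eq_true, if_false]
    rintro h
    rw [Sum.inl.injEq] at h
    subst h
    simp [hcu] at hj
  · simp

lemma inr_eq_tok (hcu : c u = true) (j : Fin n) : (Sum.inr u = tok c j) ↔ j = u := by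
  unfold tok
  rcases hj : c j with _ | _
  · simp only [Bool.false_eq_true, if_false]
    constructor
    · rintro h; exact absurd h (by simp)
    · rintro rfl; rw [hcu] at hj; exact absurd hj (by simp)
  · simp only [if_true]
    rw [Sum.inr.injEq]
    exact eq_comm

lemma kk_amon (hcu : c u = true) (hcv : c v = true) (α : Mon n) :
    kk c (α + amon u v) = kk c α := by
  funext j
  unfold kk amon
  rw [Finsupp.add_apply, Finsupp.add_apply, ee, ee, Finsupp.single_apply, Finsupp.single_apply,
    if_neg (inl_ne_tok hcu j), if_neg (inl_ne_tok hcv j)]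
  simp

lemma kk_bmon (hcu : c u = true) (hcv : c v = true) (α : Mon n) (j : Fin n) :
    kk c (α + bmon u v) j = kk c α j + ((if j = u then 1 else 0) + (if j = v then 1 else 0)) := by
  unfold kk bmon
  rw [Finsupp.add_apply, Finsupp.add_apply, ee, ee, Finsupp.single_apply, Finsupp.single_apply]
  simp only [inr_eq_tok hcu j, inr_eq_tok hcv j]

lemma dd_amon (α : Mon n) (w : Fin n) :
    dd (α + amon u v) w = dd α w + ((if w = u then 1 else 0) + (if w = v then 1 else 0)) := by
  unfold amon
  rw [← add_assoc, dd_cfg]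
  · simp only [vert, Sum.elim_inl, id]
    by_cases h1 : w = u <;> by_cases h2 : w = v <;> simp [h1, h2, add_assoc]

lemma dd_bmon (α : Mon n) (w : Fin n) :
    dd (α + bmon u v) w = dd α w + ((if w = u then 1 else 0) + (if w = v then 1 else 0)) := by
  unfold bmon
  rw [← add_assoc, dd_cfg]
  · simp only [vert, Sum.elim_inr, id]
    by_cases h1 : w = u <;> by_cases h2 : w = v <;> simp [h1, h2, add_assoc]

lemma suppd_amon (α : Mon n) :
    suppd (α + amon u v) = fun w => suppd α w ∨ w = u ∨ w = v := by
  funext w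
  unfold suppd
  rw [dd_amon]
  by_cases hu : w = u <;> by_cases hv : w = v <;> simp [hu, hv] <;> omega

lemma corr_fwd (hAs : Symmetric Hadj) {S : Fin n → Prop} {p q : Fin n}
    (h : Reach (A2 Hadj u v) S p q) :
    Reach Hadj (fun w => S w ∨ w = u ∨ w = v) p q := by
  set S' := fun w => S w ∨ w = u ∨ w = v with hS'
  induction h with
  | refl => exact Relation.ReflTransGen.refl
  | tail hr hstep ih =>
      rename_i x y
      obtain ⟨hA2, hSx, hSy⟩ := hstep
      rcases hA2 with h | ⟨hne, h1, h2⟩ | ⟨hne, h1, h2⟩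
      · exact ih.tail ⟨h, Or.inl hSx, Or.inl hSy⟩
      · exact (ih.tail ⟨hAs h1, Or.inl hSx, Or.inr (Or.inl rfl)⟩).tail
          ⟨h2, Or.inr (Or.inl rfl), Or.inl hSy⟩
      · exact (ih.tail ⟨hAs h1, Or.inl hSx, Or.inr (Or.inr rfl)⟩).tail
          ⟨h2, Or.inr (Or.inr rfl), Or.inl hSy⟩

lemma corr_bwd (hAs : Symmetric Hadj) (hirr : ∀ i, ¬ Hadj i i) (hne : ¬ Hadj u v)
    {S : Fin n → Prop} {p q : Fin n}
    (h : Reach Hadj (fun w => S w ∨ w = u ∨ w = v) p q) (hq : S q) (hp : S p) :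
    Reach (A2 Hadj u v) S p q := by
  set S' := fun w => S w ∨ w = u ∨ w = v with hS'
  have main : (S p → Reach (A2 Hadj u v) S p q) ∧
      ((p = u ∨ p = v) → ¬ S p → ∃ t, S t ∧ Hadj p t ∧ Reach (A2 Hadj u v) S t q) := by
    refine Relation.ReflTransGen.head_induction_on
      (motive := fun a _ => (S a → Reach (A2 Hadj u v) S a q) ∧
        ((a = u ∨ a = v) → ¬ S a → ∃ t, S t ∧ Hadj a t ∧ Reach (A2 Hadj u v) S t q))
      h ?_ ?_
    · exact ⟨fun _ => Relation.ReflTransGen.refl, fun _ hnq => absurd hq hnq⟩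
    · intro x t hrel hrest ihΘ
      obtain ⟨hxt, hS'x, hS't⟩ := hrel
      have hStS : S t ∨ (t = u ∨ t = v) := by
        rcases hS't with h | h | h
        · exact Or.inl h
        · exact Or.inr (Or.inl h)
        · exact Or.inr (Or.inr h)
      constructor
      · intro hSx
        by_cases hSt : S t
        · exact Relation.ReflTransGen.head ⟨Or.inl hxt, hSx, hSt⟩ (ihΘ.1 hSt)
        · have htuv : t = u ∨ t = v := by tauto
          obtain ⟨t₁, hSt₁, hAt₁, hR⟩ := ihΘ.2 htuv hSt
          rcases eq_or_ne x t₁ with rfl | hxt₁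
          · exact hR
          · refine Relation.ReflTransGen.head ⟨?_, hSx, hSt₁⟩ hR
            rcases htuv with rfl | rfl
            · exact Or.inr (Or.inl ⟨hxt₁, hAs hxt, hAt₁⟩)
            · exact Or.inr (Or.inr ⟨hxt₁, hAs hxt, hAt₁⟩)
      · intro hxuv hnSx
        have hSt : S t := by
          rcases hStS with h | h
          · exact h
          · exfalso
            rcases hxuv with rfl | rfl <;> rcases h with rfl | rfl <;>
              first
                | exact hirr _ hxt
                | exact hne hxt
                | exact hne (hAs hxt)
        exact ⟨t, hSt, hxt, ihΘ.1 hSt⟩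
  exact main.1 hp


lemma tt_zero (A : Fin n → Fin n → Prop) {α : Mon n} {i : Fin n} (h : ¬ suppd α i) :
    tt c A α i = 0 := by
  unfold tt
  apply Finset.sum_eq_zero
  intro j _
  rw [if_neg (fun hc => h hc.1)]

lemma tt_class_const {A : Fin n → Fin n → Prop} (hAs : Symmetric A) {α : Mon n} {i p : Fin n}
    (h : creach A (suppd α) i p) : tt c A α i = tt c A α p := by
  unfold tt
  apply Finset.sum_congr rfl
  intro j _
  rw [iff_iff_eq.mp (creach_congr hAs h j)]

lemma kk_eq_zero_of_not_suppd {α : Mon n} {j : Fin n} (h : ¬ suppd α j) : kk c α j = 0 := by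
  unfold suppd at h
  have := kk_le_dd c α j
  omega

lemma inv_sumkk {A : Fin n → Fin n → Prop} {α β : Mon n} (h : Inv c A α = Inv c A β) :
    ∑ j : Fin n, kk c α j = ∑ j : Fin n, kk c β j := congrArg (fun p => p.2.2) h

lemma suppd_eq_of_dd {α β : Mon n} (h : dd α = dd β) : suppd α = suppd β := by
  funext w; unfold suppd; rw [h]

variable (hAs : Symmetric Hadj) (hirr : ∀ i, ¬ Hadj i i) (hne : ¬ Hadj u v)
  (hcu : c u = true) (hcv : c v = true)
include hAs hirr hne hcu hcv

lemma corr_tt (α : Mon n) {i : Fin n} (hi : suppd α i) :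
    tt c (A2 Hadj u v) α i = tt c Hadj (α + amon u v) i := by
  unfold tt
  rw [suppd_amon]
  apply Finset.sum_congr rfl
  intro j _
  rw [kk_amon hcu hcv]
  by_cases hSj : suppd α j
  · have hiff : creach (A2 Hadj u v) (suppd α) i j
        ↔ creach Hadj (fun w => suppd α w ∨ w = u ∨ w = v) i j := by
      constructor
      · rintro ⟨h1, h2, h3⟩
        exact ⟨Or.inl h1, Or.inl h2, corr_fwd hAs h3⟩
      · rintro ⟨h1, h2, h3⟩
        exact ⟨hi, hSj, corr_bwd hAs hirr hne h3 hSj hi⟩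
    rw [iff_iff_eq.mp hiff]
  · rw [if_neg (fun hc => hSj hc.2.1)]
    by_cases hcr : creach Hadj (fun w => suppd α w ∨ w = u ∨ w = v) i j
    · rw [if_pos hcr, kk_eq_zero_of_not_suppd hSj]
    · rw [if_neg hcr]

lemma tt_amon_zero {α : Mon n} {i : Fin n}
    (hnex : ¬ ∃ p, suppd α p ∧ creach Hadj (suppd (α + amon u v)) i p) :
    tt c Hadj (α + amon u v) i = 0 := by
  unfold tt
  apply Finset.sum_eq_zero
  intro j _
  by_cases hcr : creach Hadj (suppd (α + amon u v)) i j
  · rw [if_pos hcr, kk_amon hcu hcv]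
    by_cases hSj : suppd α j
    · exact absurd ⟨j, hSj, hcr⟩ hnex
    · exact kk_eq_zero_of_not_suppd hSj
  · rw [if_neg hcr]

lemma K1 {α β : Mon n}
    (h : Inv c Hadj (α + amon u v) = Inv c Hadj (β + amon u v)) :
    Inv c (A2 Hadj u v) α = Inv c (A2 Hadj u v) β := by
  have hdd' : dd (α + amon u v) = dd (β + amon u v) := inv_dd h
  have hdd : dd α = dd β := by
    funext w
    have := congrFun hdd' w
    rw [dd_amon, dd_amon] at this
    omega
  have hsupp : suppd α = suppd β := suppd_eq_of_dd hdd
  have htt' := inv_tt h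
  have hsum : ∑ j : Fin n, kk c α j = ∑ j : Fin n, kk c β j := by
    have := inv_sumkk h
    rwa [kk_amon hcu hcv, kk_amon hcu hcv] at this
  unfold Inv
  refine congrArg₂ Prod.mk ?_ (congrArg₂ Prod.mk ?_ hsum)
  · funext w; rw [hdd]
  · funext i
    by_cases hi : suppd α i
    · rw [corr_tt hAs hirr hne hcu hcv α hi,
        corr_tt hAs hirr hne hcu hcv β (hsupp ▸ hi)]
      exact congrFun htt' i
    · rw [tt_zero _ hi, tt_zero _ (hsupp ▸ hi)]

lemma K6a {α β : Mon n}
    (h : Inv c (A2 Hadj u v) α = Inv c (A2 Hadj u v) β) :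
    Inv c Hadj (α + amon u v) = Inv c Hadj (β + amon u v) := by
  have hdd : dd α = dd β := inv_dd h
  have hsupp : suppd α = suppd β := suppd_eq_of_dd hdd
  have hdd' : dd (α + amon u v) = dd (β + amon u v) := by
    funext w; rw [dd_amon, dd_amon, hdd]
  have hsupp' : suppd (α + amon u v) = suppd (β + amon u v) := suppd_eq_of_dd hdd'
  have htt := inv_tt h
  have hsum : ∑ j : Fin n, kk c (α + amon u v) j = ∑ j : Fin n, kk c (β + amon u v) j := by
    rw [kk_amon hcu hcv, kk_amon hcu hcv]
    exact inv_sumkk h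
  unfold Inv
  refine congrArg₂ Prod.mk ?_ (congrArg₂ Prod.mk ?_ hsum)
  · funext w; rw [hdd']
  · funext i
    by_cases hi : suppd α i
    · rw [← corr_tt hAs hirr hne hcu hcv α hi,
        ← corr_tt hAs hirr hne hcu hcv β (hsupp ▸ hi)]
      exact congrFun htt i
    · by_cases hex : ∃ p, suppd α p ∧ creach Hadj (suppd (α + amon u v)) i p
      · obtain ⟨p, hSp, hcr⟩ := hex
        calc tt c Hadj (α + amon u v) i
            = tt c Hadj (α + amon u v) p := tt_class_const hAs hcr
          _ = tt c (A2 Hadj u v) α p := (corr_tt hAs hirr hne hcu hcv α hSp).symm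
          _ = tt c (A2 Hadj u v) β p := congrFun htt p
          _ = tt c Hadj (β + amon u v) p := corr_tt hAs hirr hne hcu hcv β (hsupp ▸ hSp)
          _ = tt c Hadj (β + amon u v) i := (tt_class_const hAs (hsupp' ▸ hcr)).symm
      · rw [tt_amon_zero hAs hirr hne hcu hcv hex, tt_amon_zero hAs hirr hne hcu hcv
          (by rw [← hsupp', ← hsupp]; exact hex)]

lemma sum_kk_bmon (α : Mon n) :
    ∑ j : Fin n, kk c (α + bmon u v) j = (∑ j : Fin n, kk c α j) + 2 := by
  have : ∀ j, kk c (α + bmon u v) j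
      = kk c α j + ((if j = u then 1 else 0) + (if j = v then 1 else 0)) :=
    fun j => kk_bmon hcu hcv α j
  rw [Finset.sum_congr rfl (fun j _ => this j), Finset.sum_add_distrib,
    Finset.sum_add_distrib, Finset.sum_ite_eq' Finset.univ u (fun _ => (1:ℕ)),
    Finset.sum_ite_eq' Finset.univ v (fun _ => (1:ℕ))]
  simp

lemma suppd_bmon_amon (α : Mon n) : suppd (α + bmon u v) = suppd (α + amon u v) := by
  funext w; unfold suppd; rw [dd_bmon, dd_amon]

lemma tt_bmon_split (α : Mon n) (i : Fin n) :
    tt c Hadj (α + bmon u v) i = tt c Hadj (α + amon u v) i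
      + ((if creach Hadj (suppd (α + amon u v)) i u then 1 else 0)
        + (if creach Hadj (suppd (α + amon u v)) i v then 1 else 0)) := by
  unfold tt
  rw [suppd_bmon_amon hAs hirr hne hcu hcv]
  have hpt : ∀ j, (if creach Hadj (suppd (α + amon u v)) i j then kk c (α + bmon u v) j else 0)
      = (if creach Hadj (suppd (α + amon u v)) i j then kk c (α + amon u v) j else 0)
        + ((if creach Hadj (suppd (α + amon u v)) i j then (if j = u then 1 else 0) else 0)
          + (if creach Hadj (suppd (α + amon u v)) i j then (if j = v then 1 else 0) else 0)) := by
    intro j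
    by_cases hcr : creach Hadj (suppd (α + amon u v)) i j
    · rw [if_pos hcr, if_pos hcr, if_pos hcr, if_pos hcr, kk_bmon hcu hcv, kk_amon hcu hcv]
    · rw [if_neg hcr, if_neg hcr, if_neg hcr, if_neg hcr]
  rw [Finset.sum_congr rfl (fun j _ => hpt j), Finset.sum_add_distrib, Finset.sum_add_distrib]
  congr 1
  congr 1
  · rw [Finset.sum_eq_single u]
    · rw [if_pos rfl]
    · intro b _ hb
      rw [if_neg hb]
      split <;> rfl
    · intro hu; exact absurd (Finset.mem_univ u) hu
  · rw [Finset.sum_eq_single v]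
    · rw [if_pos rfl]
    · intro b _ hb
      rw [if_neg hb]
      split <;> rfl
    · intro hv; exact absurd (Finset.mem_univ v) hv

lemma K6b {α β : Mon n}
    (h : Inv c (A2 Hadj u v) α = Inv c (A2 Hadj u v) β) :
    Inv c Hadj (α + bmon u v) = Inv c Hadj (β + bmon u v) := by
  have ha := K6a hAs hirr hne hcu hcv h
  have hdd : dd α = dd β := inv_dd h
  have hdd' : dd (α + amon u v) = dd (β + amon u v) := inv_dd ha
  have hsupp' : suppd (α + amon u v) = suppd (β + amon u v) := suppd_eq_of_dd hdd'
  have htt' := inv_tt ha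
  unfold Inv
  refine congrArg₂ Prod.mk ?_ (congrArg₂ Prod.mk ?_ ?_)
  · funext w; rw [dd_bmon, dd_bmon, hdd]
  · funext i
    rw [tt_bmon_split hAs hirr hne hcu hcv, tt_bmon_split hAs hirr hne hcu hcv, congrFun htt' i, hsupp']
  · rw [sum_kk_bmon hAs hirr hne hcu hcv α, sum_kk_bmon hAs hirr hne hcu hcv β, inv_sumkk h]

end Corr


/-! ### identification of the ideals -/

section Ideals

variable {K : Type} [Field K] {c : Fin n → Bool}

lemma Xee (s : Fin n ⊕ Fin n) : (X s : MvPolynomial (Fin n ⊕ Fin n) K) = monomial (ee s) 1 := rfl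

lemma Xmul (s t : Fin n ⊕ Fin n) :
    (X s * X t : MvPolynomial (Fin n ⊕ Fin n) K) = monomial (ee s + ee t) 1 := by
  rw [Xee, Xee, monomial_mul, one_mul]

lemma pbei_eq (G' : SimpleGraph (Fin n)) (hprop : ∀ i j, G'.Adj i j → c i ≠ c j) :
    pbei K G' = Ideal.span (Bset (Rgen c G'.Adj)) := by
  unfold pbei
  apply le_antisymm <;> rw [Ideal.span_le]
  · rintro f ⟨i, j, hij, rfl⟩
    rcases hci : c i with _ | _
    · have hcj : c j = true := by
        rcases hcj : c j with _ | _
        · exact absurd (hci.trans hcj.symm) (hprop i j hij)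
        · rfl
      apply Ideal.subset_span
      refine ⟨ee (tok c i) + ee (cotok c j), ee (cotok c i) + ee (tok c j),
        ⟨i, j, hij, rfl, rfl⟩, ?_⟩
      rw [Xmul, Xmul]
      unfold tok cotok
      rw [if_neg (by simp [hci]), if_pos hcj, if_neg (by simp [hci]), if_pos hcj]
    · have hcj : c j = false := by
        rcases hcj : c j with _ | _
        · rfl
        · exact absurd (hci.trans hcj.symm) (hprop i j hij)
      apply Ideal.subset_span
      refine ⟨ee (tok c j) + ee (cotok c i), ee (cotok c j) + ee (tok c i),
        ⟨j, i, hij.symm, rfl, rfl⟩, ?_⟩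
      rw [Xmul, Xmul]
      unfold tok cotok
      rw [if_neg (by simp [hcj]), if_pos hci, if_neg (by simp [hcj]), if_pos hci,
        add_comm (ee (Sum.inl j)) (ee (Sum.inl i)), add_comm (ee (Sum.inr j)) (ee (Sum.inr i))]
  · rintro f ⟨p, q, ⟨i, j, hij, rfl, rfl⟩, rfl⟩
    rcases hci : c i with _ | _
    · have hcj : c j = true := by
        rcases hcj : c j with _ | _
        · exact absurd (hci.trans hcj.symm) (hprop i j hij)
        · rfl
      apply Ideal.subset_span
      refine ⟨i, j, hij, ?_⟩
      rw [Xmul, Xmul]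
      unfold tok cotok
      rw [if_neg (by simp [hci]), if_pos hcj, if_neg (by simp [hci]), if_pos hcj]
    · have hcj : c j = false := by
        rcases hcj : c j with _ | _
        · rfl
        · exact absurd (hci.trans hcj.symm) (hprop i j hij)
      have hmem : (X (Sum.inl i) * X (Sum.inl j) - X (Sum.inr i) * X (Sum.inr j) :
          MvPolynomial (Fin n ⊕ Fin n) K) ∈
          Ideal.span {f | ∃ i j, G'.Adj i j ∧
            f = X (Sum.inl i) * X (Sum.inl j) - X (Sum.inr i) * X (Sum.inr j)} :=
        Ideal.subset_span ⟨i, j, hij, rfl⟩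
      have heq : (monomial (ee (tok c i) + ee (cotok c j))) (1:K)
          - (monomial (ee (cotok c i) + ee (tok c j))) 1
          = -(X (Sum.inl i) * X (Sum.inl j) - X (Sum.inr i) * X (Sum.inr j)) := by
        rw [Xmul, Xmul]
        unfold tok cotok
        rw [if_pos hci, if_neg (by simp [hcj]), if_pos hci, if_neg (by simp [hcj]),
          add_comm (ee (Sum.inr i)) (ee (Sum.inr j)), add_comm (ee (Sum.inl i)) (ee (Sum.inl j))]
        ring
      rw [heq]
      exact neg_mem hmem

lemma dspan_eq {G' : SimpleGraph (Fin n)} {u v : Fin n}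
    (hu : ∀ i, G'.Adj u i → c i = false) (hv : ∀ i, G'.Adj v i → c i = false) :
    Ideal.span {f : MvPolynomial (Fin n ⊕ Fin n) K | ∃ i j,
        ((G'.Adj u i ∧ G'.Adj u j) ∨ (G'.Adj v i ∧ G'.Adj v j)) ∧
        f = X (Sum.inl i) * X (Sum.inr j) - X (Sum.inl j) * X (Sum.inr i)}
      = Ideal.span (Bset (Rgen c (fun i j =>
          (i ≠ j ∧ G'.Adj u i ∧ G'.Adj u j) ∨ (i ≠ j ∧ G'.Adj v i ∧ G'.Adj v j)))) := by
  apply le_antisymm <;> rw [Ideal.span_le]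
  · rintro f ⟨i, j, hcond, rfl⟩
    rcases eq_or_ne i j with rfl | hne
    · rw [sub_self]
      exact Ideal.zero_mem _
    · have hci : c i = false := by
        rcases hcond with ⟨h1, _⟩ | ⟨h1, _⟩
        · exact hu i h1
        · exact hv i h1
      have hcj : c j = false := by
        rcases hcond with ⟨_, h2⟩ | ⟨_, h2⟩
        · exact hu j h2
        · exact hv j h2
      apply Ideal.subset_span
      refine ⟨ee (tok c i) + ee (cotok c j), ee (cotok c i) + ee (tok c j),
        ⟨i, j, ?_, rfl, rfl⟩, ?_⟩
      · rcases hcond with ⟨h1, h2⟩ | ⟨h1, h2⟩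
        · exact Or.inl ⟨hne, h1, h2⟩
        · exact Or.inr ⟨hne, h1, h2⟩
      · rw [Xmul, Xmul]
        unfold tok cotok
        rw [if_neg (by simp [hci]), if_neg (by simp [hcj]), if_neg (by simp [hci]),
          if_neg (by simp [hcj]), add_comm (ee (Sum.inr i)) (ee (Sum.inl j))]
  · rintro f ⟨p, q, ⟨i, j, hij, rfl, rfl⟩, rfl⟩
    have hci : c i = false := by
      rcases hij with ⟨_, h1, _⟩ | ⟨_, h1, _⟩
      · exact hu i h1
      · exact hv i h1
    have hcj : c j = false := by
      rcases hij with ⟨_, _, h2⟩ | ⟨_, _, h2⟩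
      · exact hu j h2
      · exact hv j h2
    apply Ideal.subset_span
    refine ⟨i, j, ?_, ?_⟩
    · rcases hij with ⟨_, h1, h2⟩ | ⟨_, h1, h2⟩
      · exact Or.inl ⟨h1, h2⟩
      · exact Or.inr ⟨h1, h2⟩
    · rw [Xmul, Xmul]
      unfold tok cotok
      rw [if_neg (by simp [hci]), if_neg (by simp [hcj]), if_neg (by simp [hci]),
        if_neg (by simp [hcj]), add_comm (ee (Sum.inr i)) (ee (Sum.inl j))]

lemma bset_split {Hadj : Fin n → Fin n → Prop} {u v : Fin n} :
    (Bset (Rgen c (A2 Hadj u v)) : Set (MvPolynomial (Fin n ⊕ Fin n) K))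
      = Bset (Rgen c Hadj) ∪ Bset (Rgen c (fun i j =>
          (i ≠ j ∧ Hadj u i ∧ Hadj u j) ∨ (i ≠ j ∧ Hadj v i ∧ Hadj v j))) := by
  ext f
  constructor
  · rintro ⟨p, q, ⟨i, j, hij, hp, hq⟩, rfl⟩
    rcases hij with h | h | h
    · exact Or.inl ⟨p, q, ⟨i, j, h, hp, hq⟩, rfl⟩
    · exact Or.inr ⟨p, q, ⟨i, j, Or.inl h, hp, hq⟩, rfl⟩
    · exact Or.inr ⟨p, q, ⟨i, j, Or.inr h, hp, hq⟩, rfl⟩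
  · rintro (⟨p, q, ⟨i, j, h, hp, hq⟩, rfl⟩ | ⟨p, q, ⟨i, j, h, hp, hq⟩, rfl⟩)
    · exact ⟨p, q, ⟨i, j, Or.inl h, hp, hq⟩, rfl⟩
    · rcases h with h | h
      · exact ⟨p, q, ⟨i, j, Or.inr (Or.inl h), hp, hq⟩, rfl⟩
      · exact ⟨p, q, ⟨i, j, Or.inr (Or.inr h), hp, hq⟩, rfl⟩

end Ideals


end Stmt15Aux

open Stmt15Aux in
/-- If `G` is non-bipartite and `e = {u,v}` is an edge with `G∖e` bipartite,
then `I_{G∖e} : (x_u x_v − y_u y_v)` equals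
`I_{G∖e} + (x_i y_j − x_j y_i : i,j ∈ N_{G∖e}(u) or i,j ∈ N_{G∖e}(v))`. -/
theorem stmt15 {n : ℕ} (K : Type) [Field K] (G : SimpleGraph (Fin n))
    (hnb : ¬ G.Colorable 2) (u v : Fin n) (huv : G.Adj u v)
    (hbip : (G.deleteEdges {s(u, v)}).Colorable 2) :
    (pbei K (G.deleteEdges {s(u, v)})).colon
        ((Ideal.span {X (Sum.inl u) * X (Sum.inl v) - X (Sum.inr u) * X (Sum.inr v)} :
          Ideal (MvPolynomial (Fin n ⊕ Fin n) K)) : Set (MvPolynomial (Fin n ⊕ Fin n) K))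
      =
    pbei K (G.deleteEdges {s(u, v)}) ⊔
      Ideal.span {f | ∃ i j,
        (((G.deleteEdges {s(u, v)}).Adj u i ∧ (G.deleteEdges {s(u, v)}).Adj u j) ∨
         ((G.deleteEdges {s(u, v)}).Adj v i ∧ (G.deleteEdges {s(u, v)}).Adj v j)) ∧
        f = X (Sum.inl i) * X (Sum.inr j) - X (Sum.inl j) * X (Sum.inr i)} := by
  classical
  set Hd := G.deleteEdges {s(u, v)} with hHd
  obtain ⟨C⟩ := hbip
  have fin2 : ∀ x y z : Fin 2, x ≠ z → y ≠ z → x = y := by decide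
  have hCuv : C v = C u := by
    by_contra hvu
    refine hnb ⟨SimpleGraph.Coloring.mk C ?_⟩
    intro a b hab
    by_cases hsab : s(a, b) = s(u, v)
    · rcases Sym2.eq_iff.mp hsab with ⟨ha, hb⟩ | ⟨ha, hb⟩
      · subst ha; subst hb; exact fun h => hvu h.symm
      · subst ha; subst hb; exact fun h => hvu h
    · exact C.valid ((SimpleGraph.deleteEdges_adj).mpr ⟨hab, by simpa using hsab⟩)
  set c : Fin n → Bool := fun i => decide (C i = C u) with hcdef
  have hcu : c u = true := by simp [hcdef]
  have hcv : c v = true := by simp [hcdef, hCuv]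
  have hprop : ∀ i j, Hd.Adj i j → c i ≠ c j := by
    intro i j hij heq
    have hval : C i ≠ C j := C.valid hij
    rw [hcdef] at heq
    simp only [decide_eq_decide] at heq
    by_cases hci : C i = C u
    · exact hval (hci.trans (heq.mp hci).symm)
    · exact hval (fin2 _ _ _ hci (fun h => hci (heq.mpr h)))
  have hHs : Symmetric Hd.Adj := fun a b h => h.symm
  have hHirr : ∀ i, ¬ Hd.Adj i i := fun i => Hd.irrefl
  have hneuv : ¬ Hd.Adj u v := by
    rw [hHd]
    simp [SimpleGraph.deleteEdges_adj]
  have hu' : ∀ i, Hd.Adj u i → c i = false := by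
    intro i h
    rcases hc : c i with _ | _
    · rfl
    · exact absurd (hcu.trans hc.symm) (hprop u i h)
  have hv' : ∀ i, Hd.Adj v i → c i = false := by
    intro i h
    rcases hc : c i with _ | _
    · rfl
    · exact absurd (hcv.trans hc.symm) (hprop v i h)
  have hA2s : Symmetric (A2 Hd.Adj u v) := a2_symm hHs
  have hA2irr : ∀ i, ¬ A2 Hd.Adj u v i i := a2_irrefl hHirr
  have hsplit : Ideal.span (Bset (Rgen c (A2 Hd.Adj u v)) : Set (MvPolynomial (Fin n ⊕ Fin n) K))
      = pbei K Hd ⊔ Ideal.span {f | ∃ i j,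
        ((Hd.Adj u i ∧ Hd.Adj u j) ∨ (Hd.Adj v i ∧ Hd.Adj v j)) ∧
        f = X (Sum.inl i) * X (Sum.inr j) - X (Sum.inl j) * X (Sum.inr i)} := by
    rw [bset_split, Ideal.span_union, ← pbei_eq Hd hprop, ← dspan_eq hu' hv']
  have hf : (X (Sum.inl u) * X (Sum.inl v) - X (Sum.inr u) * X (Sum.inr v) :
      MvPolynomial (Fin n ⊕ Fin n) K) = monomial (amon u v) 1 - monomial (bmon u v) 1 := by
    rw [Xmul, Xmul]; rfl
  ext g
  rw [Ideal.mem_colon_span_singleton, ← hsplit, hf, pbei_eq Hd hprop,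
    mem_span_inv_iff hHs hHirr, mem_span_inv_iff hA2s hA2irr]
  have hexp : ∀ q, cs (Inv c Hd.Adj) (g * (monomial (amon u v) 1 - monomial (bmon u v) 1)) q
      = cs (fun δ => Inv c Hd.Adj (amon u v + δ)) g q
        - cs (fun δ => Inv c Hd.Adj (bmon u v + δ)) g q := by
    intro q
    rw [mul_sub, mul_comm g ((monomial (amon u v)) 1), mul_comm g ((monomial (bmon u v)) 1),
      cs_sub, cs_mul_monomial, cs_mul_monomial]
  have hJa : ∀ a b : Mon n, Inv c (A2 Hd.Adj u v) a = Inv c (A2 Hd.Adj u v) b →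
      Inv c Hd.Adj (amon u v + a) = Inv c Hd.Adj (amon u v + b) := by
    intro a b hab
    rw [add_comm (amon u v) a, add_comm (amon u v) b]
    exact K6a hHs hHirr hneuv hcu hcv hab
  have hJb : ∀ a b : Mon n, Inv c (A2 Hd.Adj u v) a = Inv c (A2 Hd.Adj u v) b →
      Inv c Hd.Adj (bmon u v + a) = Inv c Hd.Adj (bmon u v + b) := by
    intro a b hab
    rw [add_comm (bmon u v) a, add_comm (bmon u v) b]
    exact K6b hHs hHirr hneuv hcu hcv hab
  have hK1' : ∀ a b : Mon n, Inv c Hd.Adj (amon u v + a) = Inv c Hd.Adj (amon u v + b) →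
      Inv c (A2 Hd.Adj u v) a = Inv c (A2 Hd.Adj u v) b := by
    intro a b hab
    rw [add_comm (amon u v) a, add_comm (amon u v) b] at hab
    exact K1 hHs hHirr hneuv hcu hcv hab
  constructor
  · intro h1
    have h1' : ∀ q, cs (fun δ => Inv c Hd.Adj (amon u v + δ)) g q
        = cs (fun δ => Inv c Hd.Adj (bmon u v + δ)) g q := by
      intro q
      have h := h1 q
      rw [hexp q, sub_eq_zero] at h
      exact h
    have key : ∀ N : ℕ, ∀ q : Data n, q.2.2 = N → cs (Inv c (A2 Hd.Adj u v)) g q = 0 := by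
      intro N
      induction N using Nat.strong_induction_on with
      | _ N ih =>
        intro q hq
        by_cases hE : ∃ α₀, α₀ ∈ g.support ∧ Inv c (A2 Hd.Adj u v) α₀ = q
        · obtain ⟨α₀, hα₀s, hα₀q⟩ := hE
          have hL : cs (fun δ => Inv c Hd.Adj (amon u v + δ)) g (Inv c Hd.Adj (amon u v + α₀))
              = cs (Inv c (A2 Hd.Adj u v)) g q := by
            unfold cs
            apply Finset.sum_congr rfl
            intro α _
            have hiff : (Inv c Hd.Adj (amon u v + α) = Inv c Hd.Adj (amon u v + α₀))
                ↔ (Inv c (A2 Hd.Adj u v) α = q) := by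
              constructor
              · intro h
                rw [← hα₀q]
                exact hK1' α α₀ h
              · intro h
                exact hJa α α₀ (h.trans hα₀q.symm)
            rw [iff_iff_eq.mp hiff]
          have hR : cs (fun δ => Inv c Hd.Adj (bmon u v + δ)) g
              (Inv c Hd.Adj (amon u v + α₀)) = 0 := by
            refine cs_fiber_zero hJb g _ ?_
            intro α₁ hco
            have hdeg : (Inv c (A2 Hd.Adj u v) α₁).2.2 < N := by
              have h3 := congrArg (fun p : Data n => p.2.2) hco
              have e1 : (Inv c Hd.Adj (bmon u v + α₁)).2.2
                  = (∑ j : Fin n, kk c α₁ j) + 2 := by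
                show (∑ j : Fin n, kk c (bmon u v + α₁) j) = _
                rw [add_comm (bmon u v) α₁]
                exact sum_kk_bmon hHs hHirr hneuv hcu hcv α₁
              have e2 : (Inv c Hd.Adj (amon u v + α₀)).2.2
                  = (∑ j : Fin n, kk c α₀ j) := by
                show (∑ j : Fin n, kk c (amon u v + α₀) j) = _
                rw [add_comm (amon u v) α₀, kk_amon hcu hcv]
              have e4 : (Inv c (A2 Hd.Adj u v) α₁).2.2 = ∑ j : Fin n, kk c α₁ j := rfl
              have e5 : (Inv c (A2 Hd.Adj u v) α₀).2.2 = N := by rw [hα₀q, hq]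
              have e3 : (Inv c (A2 Hd.Adj u v) α₀).2.2 = ∑ j : Fin n, kk c α₀ j := rfl
              simp only [e1, e2] at h3
              omega
            exact ih _ hdeg (Inv c (A2 Hd.Adj u v) α₁) rfl
          rw [← hL, h1' _]
          exact hR
        · unfold cs
          apply Finset.sum_eq_zero
          intro α hα
          exact if_neg (fun h => hE ⟨α, hα, h⟩)
    intro q
    exact key q.2.2 q rfl
  · intro h2 q
    rw [hexp q, cs_comp_zero hJa g h2 _, cs_comp_zero hJb g h2 _, sub_zero]
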